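/- Let V be a finite-dimensional real vector space. A symmetric bilinear form Q on V is a limit of symmetric bilinear forms on V having the Hodge-Riemann property if and only if Q has the weak Hodge-Riemann property, i.e., there exists v ≠ 0 with Q(v,v) ≥ 0 and a linear subspace of V of codimension at most one on which Q is negative semidefinite. -/

import Mathlib

open Filter Topology

/-- A symmetric bilinear form `Q` on a finite-dimensional real vector space has the
*Hodge-Riemann property* if it is nondegenerate and has exactly one positive
eigenvalue, i.e. there is a vector `v` with `Q v v > 0` and a codimension-one
subspace on which `Q` is negative definite (signature `(+,−,…,−)`). -/
def HodgeRiemann {V : Type*} [AddCommGroup V] [Module ℝ V]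
    (Q : V →ₗ[ℝ] V →ₗ[ℝ] ℝ) : Prop :=
  (∀ v : V, (∀ w : V, Q v w = 0) → v = 0) ∧
    (∃ v : V, 0 < Q v v) ∧
    ∃ W : Submodule ℝ V, Module.finrank ℝ W + 1 = Module.finrank ℝ V ∧
      ∀ w ∈ W, w ≠ 0 → Q w w < 0

section Auxiliary

open Module

variable {V : Type*} [AddCommGroup V] [Module ℝ V]


variable {V : Type*} [AddCommGroup V] [Module ℝ V]

lemma expand_pair (B : V →ₗ[ℝ] V →ₗ[ℝ] ℝ) (x y : V) (a c a' c' : ℝ) :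
    B (a • x + c • y) (a' • x + c' • y)
      = a*a'*(B x x) + a*c'*(B x y) + c*a'*(B y x) + c*c'*(B y y) := by
  simp only [map_add, map_smul, LinearMap.add_apply, LinearMap.smul_apply, smul_eq_mul]
  ring

lemma expand_sum {ι : Type*} [Fintype ι] (B : V →ₗ[ℝ] V →ₗ[ℝ] ℝ) (e : ι → V) (c c' : ι → ℝ) :
    B (∑ i, c i • e i) (∑ j, c' j • e j) = ∑ i, ∑ j, c i * c' j * B (e i) (e j) := by
  simp only [map_sum, LinearMap.sum_apply, map_smul, LinearMap.smul_apply, smul_eq_mul,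
    Finset.mul_sum]
  rw [Finset.sum_comm]
  refine Finset.sum_congr rfl fun i _ => Finset.sum_congr rfl fun j _ => by ring

lemma diag_sum {ι : Type*} [Fintype ι] [DecidableEq ι] (c c' : ι → ℝ) (M : ι → ι → ℝ)
    (hM : ∀ i j, i ≠ j → M i j = 0) :
    ∑ i, ∑ j, c i * c' j * M i j = ∑ i, c i * c' i * M i i := by
  refine Finset.sum_congr rfl fun i _ => ?_
  rw [Finset.sum_eq_single i]
  · intro j _ hj; rw [hM i j (Ne.symm hj), mul_zero]
  · intro h; exact absurd (Finset.mem_univ i) h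

lemma sum_neg {ι : Type*} [Fintype ι] (f : ι → ℝ) (hle : ∀ i, f i ≤ 0) (j : ι) (hj : f j < 0) :
    ∑ i, f i < 0 := by
  have := Finset.sum_lt_sum (g := fun _ : ι => (0:ℝ)) (fun i _ => hle i)
    ⟨j, Finset.mem_univ j, hj⟩
  simpa using this

lemma diag_eval {ι : Type*} [Fintype ι] [DecidableEq ι] (Q : V →ₗ[ℝ] V →ₗ[ℝ] ℝ)
    (b : Basis ι ℝ V) (horth : ∀ i j, i ≠ j → Q (b i) (b j) = 0) (v w : V) :
    Q v w = ∑ i, b.repr v i * b.repr w i * Q (b i) (b i) := by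
  conv_lhs => rw [← b.sum_repr v, ← b.sum_repr w]
  rw [expand_sum, diag_sum _ _ _ horth]

lemma tendsto_sum_sum {ι : Type*} [Fintype ι] (A : ℕ → ι → ι → ℝ) (A' : ι → ι → ℝ)
    (hA : ∀ i j, Tendsto (fun k => A k i j) atTop (𝓝 (A' i j)))
    (c : ℕ → ι → ℝ) (c' : ι → ℝ) (hc : ∀ i, Tendsto (fun k => c k i) atTop (𝓝 (c' i))) :
    Tendsto (fun k => ∑ i, ∑ j, c k i * c k j * A k i j) atTop
      (𝓝 (∑ i, ∑ j, c' i * c' j * A' i j)) := by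
  refine tendsto_finset_sum _ fun i _ => tendsto_finset_sum _ fun j _ => ?_
  exact ((hc i).mul (hc j)).mul (hA i j)

lemma coord_ker_finrank [FiniteDimensional ℝ V] {ι : Type*} [Fintype ι] (b : Basis ι ℝ V)
    (i : ι) : Module.finrank ℝ (LinearMap.ker (b.coord i)) + 1 = Module.finrank ℝ V := by
  have h := LinearMap.finrank_range_add_finrank_ker (b.coord i)
  have hr : LinearMap.range (b.coord i) = ⊤ := by
    rw [LinearMap.range_eq_top]
    intro x
    exact ⟨x • b i, by simp⟩
  rw [hr, finrank_top, Module.finrank_self] at h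
  omega

lemma exists_ne_zero_mem_inf [FiniteDimensional ℝ V] {x y : V}
    (hli : LinearIndependent ℝ ![x, y]) (W : Submodule ℝ V)
    (hW : Module.finrank ℝ V ≤ Module.finrank ℝ W + 1) :
    ∃ w : V, w ≠ 0 ∧ w ∈ W ∧ ∃ a c : ℝ, a • x + c • y = w := by
  set P := Submodule.span ℝ {x, y} with hPdef
  have hrange : Set.range ![x, y] = {x, y} := by
    ext v; simp [Fin.exists_fin_two, or_comm]
  have hP : finrank ℝ P = 2 := by
    rw [hPdef, ← hrange, finrank_span_eq_card hli]
    simp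
  have h1 : finrank ℝ (P ⊔ W : Submodule ℝ V) ≤ finrank ℝ V := Submodule.finrank_le _
  have h2 := Submodule.finrank_sup_add_finrank_inf_eq P W
  have h3 : 0 < finrank ℝ (P ⊓ W : Submodule ℝ V) := by omega
  have hbot : P ⊓ W ≠ ⊥ := by
    intro h
    rw [h, finrank_bot] at h3
    omega
  obtain ⟨w, hw, hw0⟩ := Submodule.exists_mem_ne_zero_of_ne_bot hbot
  obtain ⟨hwp, hww⟩ := Submodule.mem_inf.mp hw
  obtain ⟨a, c, hac⟩ := Submodule.mem_span_pair.mp hwp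
  exact ⟨w, hw0, hww, a, c, hac⟩

lemma li_pair {ι : Type*} (b : Basis ι ℝ V) {i j : ι} (hij : i ≠ j) :
    LinearIndependent ℝ ![b i, b j] := by
  have hinj : Function.Injective ![i, j] := by
    intro x y hxy
    fin_cases x <;> fin_cases y <;> simp_all
  have h := b.linearIndependent.comp ![i, j] hinj
  have : b ∘ ![i, j] = ![b i, b j] := by
    funext x; fin_cases x <;> rfl
  rwa [this] at h


variable {V : Type*} [AddCommGroup V] [Module ℝ V]

noncomputable def Qof {ι : Type*} [Fintype ι] (b : Basis ι ℝ V) (e : ι → ℝ) :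
    V →ₗ[ℝ] V →ₗ[ℝ] ℝ :=
  ∑ i, e i • (b.coord i).smulRight (b.coord i)

lemma Qof_apply {ι : Type*} [Fintype ι] (b : Basis ι ℝ V) (e : ι → ℝ) (v w : V) :
    Qof b e v w = ∑ i, b.repr v i * b.repr w i * e i := by
  simp only [Qof, LinearMap.sum_apply, LinearMap.smul_apply, LinearMap.smulRight_apply,
    Basis.coord_apply, smul_eq_mul]
  refine Finset.sum_congr rfl fun i _ => by ring

lemma Qof_symm {ι : Type*} [Fintype ι] (b : Basis ι ℝ V) (e : ι → ℝ) (v w : V) :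
    Qof b e v w = Qof b e w v := by
  rw [Qof_apply, Qof_apply]
  exact Finset.sum_congr rfl fun i _ => by ring

lemma Qof_basis {ι : Type*} [Fintype ι] [DecidableEq ι] (b : Basis ι ℝ V) (e : ι → ℝ)
    (i j : ι) : Qof b e (b i) (b j) = if i = j then e i else 0 := by
  rw [Qof_apply]
  rcases eq_or_ne i j with rfl | hij
  · rw [Finset.sum_eq_single i]
    · simp
    · intro l _ hl; simp [Basis.repr_self, Finsupp.single_apply, Ne.symm hl]
    · intro h; exact absurd (Finset.mem_univ i) h
  · rw [if_neg hij]
    apply Finset.sum_eq_zero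
    intro l _
    rcases eq_or_ne l i with rfl | hli
    · simp [Basis.repr_self, Finsupp.single_apply, Ne.symm hij]
    · simp [Basis.repr_self, Finsupp.single_apply, Ne.symm hli]

lemma sum_neg' {ι : Type*} [Fintype ι] (f : ι → ℝ) (hle : ∀ i, f i ≤ 0) (j : ι)
    (hj : f j < 0) : ∑ i, f i < 0 := by
  have := Finset.sum_lt_sum (g := fun _ : ι => (0:ℝ)) (fun i _ => hle i)
    ⟨j, Finset.mem_univ j, hj⟩
  simpa using this

lemma Qof_hodgeRiemann [FiniteDimensional ℝ V] {ι : Type*} [Fintype ι] [DecidableEq ι]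
    (b : Basis ι ℝ V) (e : ι → ℝ) (i₀ : ι) (hpos : 0 < e i₀)
    (hneg : ∀ i, i ≠ i₀ → e i < 0) :
    (∀ v : V, (∀ w : V, Qof b e v w = 0) → v = 0) ∧
      (∃ v : V, 0 < Qof b e v v) ∧
      ∃ W : Submodule ℝ V, Module.finrank ℝ W + 1 = Module.finrank ℝ V ∧
        ∀ w ∈ W, w ≠ 0 → Qof b e w w < 0 := by
  have hene : ∀ i, e i ≠ 0 := by
    intro i
    rcases eq_or_ne i i₀ with rfl | h
    · exact ne_of_gt hpos
    · exact ne_of_lt (hneg i h)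
  refine ⟨?_, ⟨b i₀, by rw [Qof_basis]; simpa using hpos⟩, ?_⟩
  · intro v hv
    have hrepr : ∀ j, b.repr v j = 0 := by
      intro j
      have := hv (b j)
      rw [Qof_apply, Finset.sum_eq_single j] at this
      · simp only [Basis.repr_self, Finsupp.single_eq_same] at this
        rcases mul_eq_zero.mp this with h | h
        · simpa using h
        · exact absurd h (hene j)
      · intro l _ hl; simp [Basis.repr_self, Finsupp.single_apply, Ne.symm hl]
      · intro h; exact absurd (Finset.mem_univ j) h
    have : b.repr v = 0 := Finsupp.ext hrepr
    simpa using b.repr.map_eq_zero_iff.mp this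
  · refine ⟨LinearMap.ker (b.coord i₀), ?_, ?_⟩
    · -- finrank ker + 1 = finrank V
      have h := LinearMap.finrank_range_add_finrank_ker (b.coord i₀)
      have hr : LinearMap.range (b.coord i₀) = ⊤ := by
        rw [LinearMap.range_eq_top]
        intro x
        exact ⟨x • b i₀, by simp⟩
      rw [hr, finrank_top, Module.finrank_self] at h
      omega
    · intro w hw hw0
      rw [Qof_apply]
      have hw0' : b.repr w i₀ = 0 := by simpa [Basis.coord_apply] using hw
      obtain ⟨j, hj⟩ : ∃ j, b.repr w j ≠ 0 := by
        by_contra h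
        push_neg at h
        exact hw0 (by simpa using b.repr.map_eq_zero_iff.mp (Finsupp.ext h))
      have hji : j ≠ i₀ := fun h => hj (h ▸ hw0')
      refine sum_neg' _ (fun i => ?_) j ?_
      · rcases eq_or_ne i i₀ with rfl | h
        · simp [hw0']
        · exact mul_nonpos_of_nonneg_of_nonpos (mul_self_nonneg _) (le_of_lt (hneg i h))
      · exact mul_neg_of_pos_of_neg (mul_self_pos.mpr hj) (hneg j hji)


lemma forward {V : Type*} [AddCommGroup V] [Module ℝ V] [FiniteDimensional ℝ V]
    (Q : V →ₗ[ℝ] V →ₗ[ℝ] ℝ)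
    (hsymm : ∀ v v' : V, Q v v' = Q v' v)
    (Qs : ℕ → (V →ₗ[ℝ] V →ₗ[ℝ] ℝ))
    (hQs : ∀ n, (∀ v v' : V, Qs n v v' = Qs n v' v) ∧
          ((∀ v : V, (∀ w : V, Qs n v w = 0) → v = 0) ∧
            (∃ v : V, 0 < Qs n v v) ∧
            ∃ W : Submodule ℝ V, Module.finrank ℝ W + 1 = Module.finrank ℝ V ∧
              ∀ w ∈ W, w ≠ 0 → Qs n w w < 0))
    (htend : ∀ v v' : V, Tendsto (fun n => Qs n v v') atTop (𝓝 (Q v v'))) :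
    (∃ v : V, v ≠ 0 ∧ 0 ≤ Q v v) ∧
        ∃ W : Submodule ℝ V, Module.finrank ℝ V ≤ Module.finrank ℝ W + 1 ∧
          ∀ w ∈ W, Q w w ≤ 0 := by
  classical
  -- V is nontrivial
  obtain ⟨v₀, hv₀⟩ := (hQs 0).2.2.1
  have hv₀ne : v₀ ≠ 0 := by
    rintro rfl
    simp at hv₀
  haveI : Nontrivial V := nontrivial_of_ne v₀ 0 hv₀ne
  have hQsymm : Q.IsSymm := ⟨fun x y => hsymm x y⟩
  obtain ⟨b, horth'⟩ := LinearMap.BilinForm.exists_orthogonal_basis hQsymm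
  have horth : ∀ i j, i ≠ j → Q (b i) (b j) = 0 := fun i j hij => horth' hij
  set d : Fin (finrank ℝ V) → ℝ := fun i => Q (b i) (b i) with hd
  set A : ℕ → Fin (finrank ℝ V) → Fin (finrank ℝ V) → ℝ := fun k i j => Qs k (b i) (b j) with hA
  have hAt : ∀ i j, Tendsto (fun k => A k i j) atTop (𝓝 (Q (b i) (b j))) :=
    fun i j => htend (b i) (b j)
  -- Subgoal A : some diagonal entry is nonnegative
  have hex : ∃ i, 0 ≤ d i := by
    by_contra hcon
    push_neg at hcon
    choose vs hvs using fun k => (hQs k).2.2.1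
    have hvne : ∀ k, vs k ≠ 0 := by
      intro k hk
      have := hvs k
      rw [hk] at this
      simp at this
    set r : ℕ → Fin (finrank ℝ V) → ℝ := fun k i => b.repr (vs k) i with hr
    have hrne : ∀ k, r k ≠ 0 := by
      intro k hk
      apply hvne k
      have : ∀ i, b.repr (vs k) i = 0 := fun i => congrFun hk i
      simpa using b.repr.map_eq_zero_iff.mp (Finsupp.ext this)
    set u : ℕ → Fin (finrank ℝ V) → ℝ := fun k => (‖r k‖⁻¹ : ℝ) • r k with hu
    have humem : ∀ k, u k ∈ Metric.sphere (0 : Fin (finrank ℝ V) → ℝ) 1 := fun k =>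
      mem_sphere_zero_iff_norm.mpr (norm_smul_inv_norm (𝕜 := ℝ) (hrne k))
    obtain ⟨cinf, hcinfmem, φ, hφ, hconv⟩ :=
      tendsto_subseq_of_bounded Metric.isBounded_sphere humem
    rw [Metric.isClosed_sphere.closure_eq] at hcinfmem
    have hcinfnorm : ‖cinf‖ = 1 := mem_sphere_zero_iff_norm.mp hcinfmem
    have hcinfne : cinf ≠ 0 := by
      intro h
      rw [h, norm_zero] at hcinfnorm
      norm_num at hcinfnorm
    obtain ⟨j₀, hj₀⟩ := Function.ne_iff.mp hcinfne
    simp only [Pi.zero_apply] at hj₀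
    have hci : ∀ i, Tendsto (fun l => u (φ l) i) atTop (𝓝 (cinf i)) := fun i =>
      tendsto_pi_nhds.mp hconv i
    -- positivity of evaluated forms
    have hpos : ∀ k, 0 < ∑ i, ∑ j, u k i * u k j * A k i j := by
      intro k
      have hsum : ∑ i, u k i • b i = (‖r k‖⁻¹ : ℝ) • vs k := by
        simp only [hu, Pi.smul_apply, smul_eq_mul, ← smul_smul]
        rw [← Finset.smul_sum]
        congr 1
        exact b.sum_repr (vs k)
      have := expand_sum (Qs k) b (u k) (u k)
      rw [hsum] at this
      rw [← this]
      simp only [map_smul, LinearMap.smul_apply, smul_eq_mul]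
      have hnr : 0 < ‖r k‖ := norm_pos_iff.mpr (hrne k)
      have ht : (0:ℝ) < ‖r k‖⁻¹ := by positivity
      exact mul_pos ht (mul_pos ht (hvs k))
    have hlim : Tendsto (fun l => ∑ i, ∑ j, u (φ l) i * u (φ l) j * A (φ l) i j) atTop
        (𝓝 (∑ i, ∑ j, cinf i * cinf j * Q (b i) (b j))) :=
      tendsto_sum_sum (fun l => A (φ l)) _
        (fun i j => (hAt i j).comp (hφ.tendsto_atTop))
        (fun l => u (φ l)) cinf hci
    have hge : 0 ≤ ∑ i, ∑ j, cinf i * cinf j * Q (b i) (b j) :=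
      ge_of_tendsto' hlim fun l => le_of_lt (hpos (φ l))
    rw [diag_sum _ _ _ horth] at hge
    have : ∑ i, cinf i * cinf i * d i < 0 :=
      sum_neg _ (fun i => mul_nonpos_of_nonneg_of_nonpos (mul_self_nonneg _)
        (le_of_lt (hcon i))) j₀
        (mul_neg_of_pos_of_neg (mul_self_pos.mpr hj₀) (hcon j₀))
    linarith
  -- Subgoal B : at most one positive diagonal entry
  have huniq : ∀ i j, i ≠ j → 0 < d i → 0 < d j → False := by
    intro i j hij hdi hdj
    choose Ws hWr hWneg using fun k => (hQs k).2.2.2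
    have hWle : ∀ k, finrank ℝ V ≤ finrank ℝ (Ws k) + 1 := fun k => (hWr k).ge
    choose w hw0 hwW a c hac using fun k =>
      exists_ne_zero_mem_inf (li_pair b hij) (Ws k) (hWle k)
    set p : ℕ → ℝ × ℝ := fun k => (a k, c k) with hp
    have hpne : ∀ k, p k ≠ 0 := by
      intro k hk
      apply hw0 k
      have h1 : a k = 0 := congrArg Prod.fst hk
      have h2 : c k = 0 := congrArg Prod.snd hk
      rw [← hac k, h1, h2]
      simp
    set u : ℕ → ℝ × ℝ := fun k => (‖p k‖⁻¹ : ℝ) • p k with hu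
    have humem : ∀ k, u k ∈ Metric.sphere (0 : ℝ × ℝ) 1 := fun k =>
      mem_sphere_zero_iff_norm.mpr (norm_smul_inv_norm (𝕜 := ℝ) (hpne k))
    obtain ⟨pinf, hpinfmem, φ, hφ, hconv⟩ :=
      tendsto_subseq_of_bounded Metric.isBounded_sphere humem
    rw [Metric.isClosed_sphere.closure_eq] at hpinfmem
    have hpinfnorm : ‖pinf‖ = 1 := mem_sphere_zero_iff_norm.mp hpinfmem
    have hpinfne : pinf ≠ 0 := by
      intro h
      rw [h, norm_zero] at hpinfnorm
      norm_num at hpinfnorm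
    have h1t : Tendsto (fun l => (u (φ l)).1) atTop (𝓝 pinf.1) :=
      ((continuous_fst.tendsto pinf).comp hconv)
    have h2t : Tendsto (fun l => (u (φ l)).2) atTop (𝓝 pinf.2) :=
      ((continuous_snd.tendsto pinf).comp hconv)
    -- each evaluation is negative
    have hneg : ∀ k, (u k).1 * (u k).1 * A k i i + (u k).1 * (u k).2 * A k i j
        + (u k).2 * (u k).1 * A k j i + (u k).2 * (u k).2 * A k j j < 0 := by
      intro k
      have hw' : (u k).1 • b i + (u k).2 • b j = (‖p k‖⁻¹ : ℝ) • w k := by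
        rw [← hac k]
        simp only [hu, hp, Prod.smul_fst, Prod.smul_snd, smul_eq_mul, smul_add, smul_smul]
      have hmem : ((‖p k‖⁻¹ : ℝ) • w k) ∈ Ws k := Submodule.smul_mem _ _ (hwW k)
      have hne : ((‖p k‖⁻¹ : ℝ) • w k) ≠ 0 := by
        apply smul_ne_zero _ (hw0 k)
        have : 0 < ‖p k‖ := norm_pos_iff.mpr (hpne k)
        positivity
      have := hWneg k _ hmem hne
      rw [← hw', expand_pair] at this
      exact this
    have hlim : Tendsto (fun l => (u (φ l)).1 * (u (φ l)).1 * A (φ l) i i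
        + (u (φ l)).1 * (u (φ l)).2 * A (φ l) i j
        + (u (φ l)).2 * (u (φ l)).1 * A (φ l) j i
        + (u (φ l)).2 * (u (φ l)).2 * A (φ l) j j) atTop
        (𝓝 (pinf.1 * pinf.1 * Q (b i) (b i) + pinf.1 * pinf.2 * Q (b i) (b j)
          + pinf.2 * pinf.1 * Q (b j) (b i) + pinf.2 * pinf.2 * Q (b j) (b j))) := by
      have hAφ : ∀ i' j', Tendsto (fun l => A (φ l) i' j') atTop (𝓝 (Q (b i') (b j'))) :=
        fun i' j' => (hAt i' j').comp (hφ.tendsto_atTop)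
      exact ((((h1t.mul h1t).mul (hAφ i i)).add ((h1t.mul h2t).mul (hAφ i j))).add
        ((h2t.mul h1t).mul (hAφ j i))).add ((h2t.mul h2t).mul (hAφ j j))
    have hle : pinf.1 * pinf.1 * Q (b i) (b i) + pinf.1 * pinf.2 * Q (b i) (b j)
          + pinf.2 * pinf.1 * Q (b j) (b i) + pinf.2 * pinf.2 * Q (b j) (b j) ≤ 0 :=
      le_of_tendsto' hlim fun l => le_of_lt (hneg (φ l))
    rw [horth i j hij, horth j i hij.symm] at hle
    have hcase : pinf.1 ≠ 0 ∨ pinf.2 ≠ 0 := by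
      by_contra hh
      push_neg at hh
      exact hpinfne (Prod.ext hh.1 hh.2)
    rcases hcase with h | h
    · nlinarith [mul_self_pos.mpr h, mul_self_nonneg pinf.2]
    · nlinarith [mul_self_pos.mpr h, mul_self_nonneg pinf.1]
  -- now conclude
  by_cases hp : ∃ j, 0 < d j
  · obtain ⟨j, hj⟩ := hp
    refine ⟨⟨b j, b.ne_zero j, le_of_lt hj⟩, LinearMap.ker (b.coord j), ?_, ?_⟩
    · exact (coord_ker_finrank b j).ge
    · intro w hw
      rw [diag_eval Q b horth w w]
      refine Finset.sum_nonpos fun i _ => ?_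
      rcases eq_or_ne i j with rfl | hijne
      · have : b.repr w i = 0 := by simpa [Basis.coord_apply] using hw
        simp [this]
      · have : d i ≤ 0 := not_lt.1 fun hlt => huniq i j hijne hlt hj
        exact mul_nonpos_of_nonneg_of_nonpos (mul_self_nonneg _) this
  · push_neg at hp
    obtain ⟨i₀, hi₀⟩ := hex
    refine ⟨⟨b i₀, b.ne_zero i₀, hi₀⟩, ⊤, ?_, ?_⟩
    · rw [finrank_top]; omega
    · intro w _
      rw [diag_eval Q b horth w w]
      exact Finset.sum_nonpos fun i _ =>
        mul_nonpos_of_nonneg_of_nonpos (mul_self_nonneg _) (hp i)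


variable {V : Type*} [AddCommGroup V] [Module ℝ V]

lemma backward [FiniteDimensional ℝ V] (Q : V →ₗ[ℝ] V →ₗ[ℝ] ℝ)
    (hsymm : ∀ v v' : V, Q v v' = Q v' v)
    (h : (∃ v : V, v ≠ 0 ∧ 0 ≤ Q v v) ∧
        ∃ W : Submodule ℝ V, Module.finrank ℝ V ≤ Module.finrank ℝ W + 1 ∧
          ∀ w ∈ W, Q w w ≤ 0) :
    ∃ Qs : ℕ → (V →ₗ[ℝ] V →ₗ[ℝ] ℝ),
        (∀ n, (∀ v v' : V, Qs n v v' = Qs n v' v) ∧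
          ((∀ v : V, (∀ w : V, Qs n v w = 0) → v = 0) ∧
            (∃ v : V, 0 < Qs n v v) ∧
            ∃ W : Submodule ℝ V, Module.finrank ℝ W + 1 = Module.finrank ℝ V ∧
              ∀ w ∈ W, w ≠ 0 → Qs n w w < 0)) ∧
        ∀ v v' : V, Tendsto (fun n => Qs n v v') atTop (𝓝 (Q v v')) := by
  obtain ⟨⟨v, hv0, hvQ⟩, W, hWr, hWneg⟩ := h
  have hQsymm : Q.IsSymm := ⟨fun x y => hsymm x y⟩
  obtain ⟨b, horth'⟩ := LinearMap.BilinForm.exists_orthogonal_basis hQsymm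
  have horth : ∀ i j, i ≠ j → Q (b i) (b j) = 0 := fun i j hij => horth' hij
  set d : Fin (finrank ℝ V) → ℝ := fun i => Q (b i) (b i) with hd
  -- existence of a nonnegative diagonal entry
  have hex : ∃ i, 0 ≤ d i := by
    by_contra hcon
    push_neg at hcon
    have hQv := diag_eval Q b horth v v
    obtain ⟨j, hj⟩ : ∃ j, b.repr v j ≠ 0 := by
      by_contra hh
      push_neg at hh
      exact hv0 (by simpa using b.repr.map_eq_zero_iff.mp (Finsupp.ext hh))
    have : Q v v < 0 := by
      rw [hQv]
      refine sum_neg _ (fun i => mul_nonpos_of_nonneg_of_nonpos (mul_self_nonneg _)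
        (le_of_lt (hcon i))) j (mul_neg_of_pos_of_neg (mul_self_pos.mpr hj) (hcon j))
    linarith
  -- at most one positive diagonal entry
  have huniq : ∀ i j, i ≠ j → 0 < d i → 0 < d j → False := by
    intro i j hij hi hj
    obtain ⟨w, hw0, hwW, a, c, hac⟩ := exists_ne_zero_mem_inf (li_pair b hij) W hWr
    have hQw : Q w w ≤ 0 := hWneg w hwW
    rw [← hac, expand_pair, horth i j hij, horth j i hij.symm] at hQw
    have hne : a ≠ 0 ∨ c ≠ 0 := by
      by_contra hh
      push_neg at hh
      apply hw0
      rw [← hac, hh.1, hh.2]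
      simp
    rcases hne with ha | hc
    · nlinarith [mul_self_pos.mpr ha, mul_self_nonneg c]
    · nlinarith [mul_self_pos.mpr hc, mul_self_nonneg a]
  obtain ⟨i₀, hi₀, hrest⟩ : ∃ i₀, 0 ≤ d i₀ ∧ ∀ i, i ≠ i₀ → d i ≤ 0 := by
    by_cases hp : ∃ i, 0 < d i
    · obtain ⟨i₀, hi₀⟩ := hp
      exact ⟨i₀, le_of_lt hi₀, fun i hi =>
        not_lt.1 fun hlt => huniq i i₀ hi hlt hi₀⟩
    · push_neg at hp
      obtain ⟨i₀, hi₀⟩ := hex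
      exact ⟨i₀, hi₀, fun i _ => hp i⟩
  set e : ℕ → Fin (finrank ℝ V) → ℝ :=
    fun k i => if i = i₀ then d i₀ + 1/((k:ℝ)+1) else d i - 1/((k:ℝ)+1) with he
  have hkpos : ∀ k : ℕ, (0:ℝ) < 1/((k:ℝ)+1) := fun k => by positivity
  refine ⟨fun k => Qof b (e k), fun k => ⟨Qof_symm b (e k), ?_⟩, ?_⟩
  · refine Qof_hodgeRiemann b (e k) i₀ ?_ ?_
    · simp only [he, if_pos rfl]
      linarith [hkpos k]
    · intro i hi
      simp only [he, if_neg hi]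
      linarith [hrest i hi, hkpos k]
  · intro v v'
    simp only [Qof_apply]
    rw [diag_eval Q b horth v v']
    refine tendsto_finset_sum _ fun i _ => ?_
    refine Tendsto.mul tendsto_const_nhds ?_
    rcases eq_or_ne i i₀ with rfl | hi
    · simp only [he, if_pos rfl]
      have := tendsto_const_nhds (x := d i) (f := atTop (α := ℕ)) |>.add
        tendsto_one_div_add_atTop_nhds_zero_nat
      simpa using this
    · simp only [he, if_neg hi]
      have := tendsto_const_nhds (x := d i) (f := atTop (α := ℕ)) |>.sub
        tendsto_one_div_add_atTop_nhds_zero_nat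
      simpa using this


end Auxiliary

/-- a symmetric bilinear form `Q` on a finite-dimensional real vector
space is a limit of symmetric bilinear forms having the Hodge-Riemann property if and
only if it has the weak Hodge-Riemann property: there exists `v ≠ 0` with `Q v v ≥ 0`
and a subspace of codimension at most one on which `Q` is negative semidefinite.
(Convergence of bilinear forms on a finite-dimensional space is pointwise
convergence, which agrees with convergence in the standard topology on the
finite-dimensional space of bilinear forms.) -/
theorem limit_hodgeRiemann_iff_weak
    {V : Type*} [AddCommGroup V] [Module ℝ V] [FiniteDimensional ℝ V]
    (Q : V →ₗ[ℝ] V →ₗ[ℝ] ℝ) (hsymm : ∀ v v' : V, Q v v' = Q v' v) :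
    (∃ Qs : ℕ → (V →ₗ[ℝ] V →ₗ[ℝ] ℝ),
        (∀ n, (∀ v v' : V, Qs n v v' = Qs n v' v) ∧ HodgeRiemann (Qs n)) ∧
        ∀ v v' : V, Tendsto (fun n => Qs n v v') atTop (𝓝 (Q v v'))) ↔
      ((∃ v : V, v ≠ 0 ∧ 0 ≤ Q v v) ∧
        ∃ W : Submodule ℝ V, Module.finrank ℝ V ≤ Module.finrank ℝ W + 1 ∧
          ∀ w ∈ W, Q w w ≤ 0) := by
  constructor
  · rintro ⟨Qs, hQs, htend⟩
    exact forward Q hsymm Qs (fun n => ⟨(hQs n).1, (hQs n).2⟩) htend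
  · intro h
    obtain ⟨Qs, h1, h2⟩ := backward Q hsymm h
    exact ⟨Qs, fun n => ⟨(h1 n).1, (h1 n).2⟩, h2⟩
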